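/- arXiv:1706.06082 — 2 statements merged into one kernel-verified Lean document; each statement's English description precedes it below -/
import Mathlib

section
/- (Serret's theorem, hard direction) If x and y are irrational and there exist a, b, c, d ∈ ℤ with ad - bc = ±1 and y = (ax + b)/(cx + d), then x ∼ y: the continued fraction expansions of x and y have a common complete quotient (equivalently, their partial quotient sequences eventually coincide up to a shift). -/
noncomputable def cq (x : ℝ) : ℕ → ℝ
  | 0 => x
  | n + 1 => 1 / (cq x n - ⌊cq x n⌋)

def CFEquiv (x y : ℝ) : Prop := ∃ i j : ℕ, cq x i = cq y j

lemma cq_add (x : ℝ) (n : ℕ) : ∀ t, cq x (n + t) = cq (cq x n) t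
  | 0 => rfl
  | t + 1 => by
      show cq x ((n + t) + 1) = _
      rw [cq, cq, cq_add x n t]

lemma CFEquiv.refl (x : ℝ) : CFEquiv x x := ⟨0, 0, rfl⟩

lemma CFEquiv.symm {x y : ℝ} : CFEquiv x y → CFEquiv y x :=
  fun ⟨i, j, h⟩ => ⟨j, i, h.symm⟩

lemma CFEquiv.trans {x y z : ℝ} : CFEquiv x y → CFEquiv y z → CFEquiv x z := by
  rintro ⟨i, j, h1⟩ ⟨k, l, h2⟩
  rcases le_total j k with h | h
  · refine ⟨i + (k - j), l, ?_⟩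
    rw [cq_add, h1, ← cq_add, Nat.add_sub_cancel' h, h2]
  · refine ⟨i, l + (j - k), ?_⟩
    rw [cq_add, ← h2, ← cq_add, Nat.add_sub_cancel' h, h1]

lemma cfe_cq (x : ℝ) (n : ℕ) : CFEquiv x (cq x n) := ⟨n, 0, rfl⟩

lemma cq_one (x : ℝ) : cq x 1 = 1 / (x - ⌊x⌋) := rfl

/-- Translation by an integer. -/
lemma cfe_add_int (x : ℝ) (k : ℤ) : CFEquiv x (x + k) := by
  refine ⟨1, 1, ?_⟩
  rw [cq_one, cq_one, Int.floor_add_intCast]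
  push_cast
  ring_nf

lemma irrational_fract_pos {x : ℝ} (hx : Irrational x) : 0 < Int.fract x := by
  rcases (Int.fract_nonneg x).lt_or_eq with h | h
  · exact h
  · exfalso
    have hz : Int.fract x = 0 := h.symm
    have : x = (⌊x⌋ : ℝ) := by
      have hd : Int.fract x = x - ⌊x⌋ := rfl
      linarith [hd ▸ hz]
    exact hx.ne_int ⌊x⌋ this

lemma irrational_cq {x : ℝ} (hx : Irrational x) : ∀ n, Irrational (cq x n)
  | 0 => hx
  | n + 1 => by
    have ih := irrational_cq hx n
    rw [cq]
    have h1 : Irrational (cq x n - ⌊cq x n⌋) := ih.sub_intCast _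
    have h2 : cq x n - ⌊cq x n⌋ ≠ 0 := h1.ne_zero
    simpa [one_div] using h1.inv

/-- Negation preserves the equivalence. -/
lemma cfe_neg {x : ℝ} (hx : Irrational x) : CFEquiv x (-x) := by
  set f := Int.fract x with hf
  have hf0 : 0 < f := irrational_fract_pos hx
  have hf1 : f < 1 := Int.fract_lt_one x
  have hfd : f = x - ⌊x⌋ := rfl
  have hfneg : Int.fract (-x) = 1 - f := Int.fract_neg (ne_of_gt hf0)
  have hfnegd : Int.fract (-x) = -x - ⌊-x⌋ := rfl
  have hcx1 : cq x 1 = 1 / f := by rw [cq_one, ← hfd]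
  have hcnx1 : cq (-x) 1 = 1 / (1 - f) := by
    rw [cq_one, ← hfnegd, hfneg]
  have hhalf : f ≠ 1 / 2 := by
    intro h
    apply hx.ne_rat ((⌊x⌋ : ℚ) + 1/2)
    push_cast
    linarith [hfd, h]
  rcases lt_or_gt_of_ne hhalf with hlt | hgt
  · -- f < 1/2 : cq (-x) 2 = 1/f - 1
    have hv1 : (1:ℝ) < 1 / (1 - f) := by
      rw [lt_div_iff₀ (by linarith)]; linarith
    have hv2 : 1 / (1 - f) < 2 := by
      rw [div_lt_iff₀ (by linarith)]; linarith
    have hfl : ⌊(1:ℝ) / (1 - f)⌋ = 1 := by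
      rw [Int.floor_eq_iff]
      constructor <;> push_cast <;> linarith
    have hcnx2 : cq (-x) 2 = 1 / f - 1 := by
      show 1 / (cq (-x) 1 - ⌊cq (-x) 1⌋) = _
      rw [hcnx1, hfl]
      push_cast
      rw [div_sub_one (by linarith : (1:ℝ) - f ≠ 0), one_div_div,
        div_sub_one (by linarith : f ≠ 0)]
      ring_nf
    have e1 : CFEquiv x (1 / f) := hcx1 ▸ cfe_cq x 1
    have e2 : CFEquiv (1 / f) (1 / f + (-1 : ℤ)) := cfe_add_int _ _
    have e3 : CFEquiv (-x) (1 / f - 1) := hcnx2 ▸ cfe_cq (-x) 2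
    refine (e1.trans e2).trans ?_
    have : (1 / f + ((-1 : ℤ) : ℝ)) = 1 / f - 1 := by push_cast; ring
    rw [this]
    exact e3.symm
  · -- f > 1/2 : cq x 2 = 1/(1-f) - 1
    have hu1 : (1:ℝ) < 1 / f := by rw [lt_div_iff₀ hf0]; linarith
    have hu2 : 1 / f < 2 := by rw [div_lt_iff₀ hf0]; linarith
    have hfl : ⌊(1:ℝ) / f⌋ = 1 := by
      rw [Int.floor_eq_iff]
      constructor <;> push_cast <;> linarith
    have hcx2 : cq x 2 = 1 / (1 - f) - 1 := by
      show 1 / (cq x 1 - ⌊cq x 1⌋) = _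
      rw [hcx1, hfl]
      push_cast
      rw [div_sub_one (by linarith : f ≠ 0), one_div_div,
        div_sub_one (by linarith : (1:ℝ) - f ≠ 0)]
      ring_nf
    have e1 : CFEquiv x (1 / (1 - f) - 1) := hcx2 ▸ cfe_cq x 2
    have e3 : CFEquiv (-x) (1 / (1 - f)) := hcnx1 ▸ cfe_cq (-x) 1
    have e2 : CFEquiv (1 / (1 - f)) (1 / (1 - f) + (-1 : ℤ)) := cfe_add_int _ _
    have : (1 / (1 - f) + ((-1 : ℤ) : ℝ)) = 1 / (1 - f) - 1 := by push_cast; ring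
    rw [this] at e2
    exact e1.trans (e3.trans e2).symm

lemma cfe_inv_pos {x : ℝ} (hx : Irrational x) (hpos : 0 < x) : CFEquiv x (1 / x) := by
  have hne1 : x ≠ 1 := fun h => hx.ne_int 1 (by simpa using h)
  rcases lt_or_gt_of_ne hne1 with hlt | hgt
  · -- x < 1 : cq x 1 = 1/x
    have hfl : ⌊x⌋ = 0 := by
      rw [Int.floor_eq_iff]
      constructor <;> push_cast <;> linarith
    refine ⟨1, 0, ?_⟩
    show 1 / (x - ⌊x⌋) = 1 / x
    rw [hfl]
    norm_num
  · -- x > 1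
    have h0 : 0 < 1 / x := by positivity
    have h1 : 1 / x < 1 := by rw [div_lt_one hpos]; exact hgt
    have hfl : ⌊1 / x⌋ = 0 := by
      rw [Int.floor_eq_iff]
      constructor <;> push_cast <;> linarith
    refine ⟨0, 1, ?_⟩
    show x = 1 / (1 / x - ⌊1 / x⌋)
    rw [hfl]
    push_cast
    rw [sub_zero, one_div_one_div]

lemma cfe_inv {x : ℝ} (hx : Irrational x) : CFEquiv x (1 / x) := by
  rcases lt_or_gt_of_ne hx.ne_zero with hneg | hpos
  · have hnx : Irrational (-x) := hx.neg
    have h1 : CFEquiv x (-x) := cfe_neg hx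
    have h2 : CFEquiv (-x) (1 / (-x)) := cfe_inv_pos hnx (by linarith)
    have h3 : Irrational (1 / (-x)) := by
      simpa [one_div] using hnx.inv
    have h4 : CFEquiv (1 / (-x)) (-(1 / (-x))) := cfe_neg h3
    have : -(1 / (-x)) = 1 / x := by field_simp
    rw [this] at h4
    exact (h1.trans h2).trans h4
  · exact cfe_inv_pos hx hpos

lemma mob_denom_ne {x : ℝ} (hx : Irrational x) {a b c d : ℤ}
    (hdet : a * d - b * c ≠ 0) : (c : ℝ) * x + d ≠ 0 := by
  intro h
  rcases eq_or_ne c 0 with hc | hc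
  · subst hc
    have hd : d ≠ 0 := by intro hd0; subst hd0; simp at hdet
    simp at h
    exact hd (by exact_mod_cast h)
  · apply hx.ne_rat (-(d : ℚ) / c)
    have hcR : (c : ℝ) ≠ 0 := Int.cast_ne_zero.mpr hc
    push_cast
    field_simp
    linarith [h]

lemma mob_irrational {x : ℝ} (hx : Irrational x) {a b c d : ℤ}
    (hdet : a * d - b * c ≠ 0) :
    Irrational (((a : ℝ) * x + b) / ((c : ℝ) * x + d)) := by
  have hden : (c : ℝ) * x + d ≠ 0 := mob_denom_ne hx hdet
  rw [Irrational]
  rintro ⟨q, hq⟩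
  have hq' : (a : ℝ) * x + b = q * ((c : ℝ) * x + d) := by
    rw [eq_div_iff hden] at hq
    linarith [hq]
  have h5 : ((a : ℝ) - (q : ℝ) * c) * x = (q : ℝ) * d - b := by linear_combination hq'
  rcases eq_or_ne ((a : ℝ) - (q : ℝ) * c) 0 with hz | hz
  · -- a = q c and b = q d, so det = 0
    rw [hz, zero_mul] at h5
    have hb : (b : ℝ) = (q : ℝ) * d := by linarith
    have ha : (a : ℝ) = (q : ℝ) * c := by linarith
    have : ((a * d - b * c : ℤ) : ℝ) = 0 := by
      push_cast
      linear_combination (d : ℝ) * ha - (c : ℝ) * hb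
    exact hdet (by exact_mod_cast this)
  · apply hx.ne_rat ((q * d - b) / (a - q * c))
    push_cast
    rw [eq_div_iff hz]
    linear_combination hq'

lemma serret_aux : ∀ n : ℕ, ∀ a b c d : ℤ, c.natAbs = n → ∀ x : ℝ, Irrational x →
    (a * d - b * c = 1 ∨ a * d - b * c = -1) →
    CFEquiv x (((a : ℝ) * x + b) / ((c : ℝ) * x + d)) := by
  intro n
  induction n using Nat.strong_induction_on with
  | _ n ih =>
    intro a b c d hn x hx hdet
    have hdet0 : a * d - b * c ≠ 0 := by rcases hdet with h | h <;> omega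
    rcases eq_or_ne c 0 with hc | hc
    · -- base case
      subst hc
      have had : a * d = 1 ∨ a * d = -1 := by omega
      have : (a = 1 ∧ d = 1) ∨ (a = -1 ∧ d = -1) ∨ (a = 1 ∧ d = -1) ∨ (a = -1 ∧ d = 1) := by
        rcases had with h | h
        · have := Int.eq_one_or_neg_one_of_mul_eq_one' h
          omega
        · have h' : a * (-d) = 1 := by linarith
          have := Int.eq_one_or_neg_one_of_mul_eq_one' h'
          omega
      rcases this with ⟨ha, hd⟩ | ⟨ha, hd⟩ | ⟨ha, hd⟩ | ⟨ha, hd⟩ <;> subst ha <;> subst hd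
      · have : ((1:ℤ) : ℝ) * x + b = x + b := by push_cast; ring
        simpa [this] using cfe_add_int x b
      · have h1 : (((-1:ℤ)) : ℝ) * x + b = -(x + (-b : ℤ)) := by push_cast; ring
        have h2 : (((0:ℤ)) : ℝ) * x + ((-1 : ℤ) : ℝ) = -1 := by push_cast; ring
        rw [h1, h2]
        have : -(x + ((-b : ℤ) : ℝ)) / (-1) = x + ((-b : ℤ) : ℝ) := by ring
        rw [this]
        exact cfe_add_int x (-b)
      · -- a = 1, d = -1 : y = (x + b)/(-1) = -(x+b) : use neg
        have h2 : (((0:ℤ)) : ℝ) * x + ((-1 : ℤ) : ℝ) = -1 := by push_cast; ring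
        rw [h2]
        have h1 : ((1:ℤ) : ℝ) * x + b = x + b := by push_cast; ring
        rw [h1]
        have : (x + (b:ℝ)) / (-1) = -(x + (b:ℝ)) := by ring
        rw [this]
        exact (cfe_add_int x b).trans (cfe_neg (hx.add_intCast b))
      · have h2 : (((0:ℤ)) : ℝ) * x + ((1 : ℤ) : ℝ) = 1 := by push_cast; ring
        rw [h2]
        have h1 : (((-1:ℤ)) : ℝ) * x + b = -(x + ((-b : ℤ) : ℝ)) := by push_cast; ring
        rw [h1]
        have : -(x + ((-b:ℤ):ℝ)) / 1 = -(x + ((-b:ℤ):ℝ)) := by ring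
        rw [this]
        exact (cfe_add_int x (-b)).trans (cfe_neg (hx.add_intCast (-b)))
    · -- inductive step
      set q : ℤ := a / c with hq
      set r : ℤ := a % c with hr
      have hEuclid : a = c * q + r := (Int.mul_ediv_add_emod a c).symm
      have hrlt : r.natAbs < c.natAbs := by
        have h1 : 0 ≤ r := Int.emod_nonneg a hc
        have h2 : r < |c| := by
          have h : a % c = a % |c| := by
            rcases abs_choice c with h | h
            · rw [h]
            · rw [h, Int.emod_neg]
          rw [hr, h]; exact Int.emod_lt_of_pos a (abs_pos.mpr hc)
        have h3 : |c| = (c.natAbs : ℤ) := Int.abs_eq_natAbs c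
        omega
      set s : ℤ := b - q * d with hs
      have hdet' : c * s - d * r = -(a * d - b * c) := by
        rw [hs]; have : r = a - c * q := by omega
        rw [this]; ring
      have hdet'' : c * s - d * r = 1 ∨ c * s - d * r = -1 := by
        rcases hdet with h | h <;> [right; left] <;> omega
      have key := ih r.natAbs (hn ▸ hrlt) c d r s rfl x hx hdet''
      -- key : CFEquiv x ((c x + d)/(r x + s))
      have hden1 : (c : ℝ) * x + d ≠ 0 := mob_denom_ne hx hdet0
      have hdr : c * s - d * r ≠ 0 := by
        rcases hdet'' with h | h <;> rw [h] <;> norm_num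
      have hden2 : (r : ℝ) * x + s ≠ 0 := mob_denom_ne hx hdr
      set y : ℝ := ((a : ℝ) * x + b) / ((c : ℝ) * x + d) with hy
      have hmain : ((c:ℝ) * x + d) / ((r:ℝ) * x + s) = 1 / (y - q) := by
        rw [hy]
        have hra : (r : ℝ) = a - c * q := by
          have h : r = a - c * q := by omega
          exact_mod_cast h
        have hsb : (s : ℝ) = b - q * d := by push_cast [hs]; ring
        rw [hra, hsb]
        rw [div_sub' hden1]
        rw [one_div_div]
        congr 1
        push_cast
        ring
      rw [hmain] at key
      -- y - q irrational
      have hyirr : Irrational y := mob_irrational hx hdet0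
      have hyq : Irrational (y - q) := hyirr.sub_intCast q
      have h1 : CFEquiv (y - q) (1 / (y - q)) := cfe_inv hyq
      have h2 : CFEquiv (y - q) y := by
        have := cfe_add_int (y - q) q
        have he : y - q + (q : ℝ) = y := by ring
        rwa [he] at this
      exact (key.trans h1.symm).trans h2

theorem serret_hard (x y : ℝ) (hx : Irrational x) (hy : Irrational y)
    (a b c d : ℤ) (hdet : a * d - b * c = 1 ∨ a * d - b * c = -1)
    (h : y = ((a : ℝ) * x + b) / ((c : ℝ) * x + d)) :
    CFEquiv x y := by
  rw [h]
  exact serret_aux c.natAbs a b c d rfl x hx hdet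
end

section
/- If x and y are irrational and y = εx + b for some b ∈ ℤ and ε = ±1, then x ∼ y (their continued fraction expansions have a common complete quotient). -/
lemma cq_succ_eq (x : ℝ) (n : ℕ) : cq x (n + 1) = 1 / Int.fract (cq x n) := rfl

lemma key (x y : ℝ) (hx : Irrational x) (b : ℤ) (h : y = -x + b)
    (hf : Int.fract x < 1/2) : cq y 3 = cq x 2 := by
  have hfx : Irrational (Int.fract x) := by
    unfold Int.fract
    exact hx.sub_intCast _
  have hfx0 : Int.fract x ≠ 0 := fun hc => hfx.ne_int 0 (by exact_mod_cast hc)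
  have hf0 : 0 < Int.fract x := lt_of_le_of_ne (Int.fract_nonneg x) (Ne.symm hfx0)
  have hgy : Int.fract y = 1 - Int.fract x := by
    rw [h, Int.fract_add_intCast, Int.fract_neg hfx0]
  set g := Int.fract y with hg
  have hg1 : g < 1 := Int.fract_lt_one y
  have hg0 : 1/2 < g := by rw [hgy]; linarith
  have hgpos : 0 < g := by linarith
  have hgne : g ≠ 0 := ne_of_gt hgpos
  have h1g : (1:ℝ) - g ≠ 0 := by rw [hgy]; intro hc; apply hfx0; linarith
  have hcy1 : cq y 1 = 1 / g := cq_succ_eq y 0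
  have hfloor : (⌊(1:ℝ)/g⌋ : ℤ) = 1 := by
    rw [Int.floor_eq_iff]
    constructor
    · push_cast
      rw [le_div_iff₀ hgpos]; linarith
    · push_cast
      rw [div_lt_iff₀ hgpos]; linarith
  have hcy2 : cq y 2 = g / (1 - g) := by
    have : cq y 2 = 1 / Int.fract (cq y 1) := cq_succ_eq y 1
    rw [this, hcy1, Int.fract, hfloor]
    push_cast
    field_simp
  have hcx1 : cq x 1 = 1 / Int.fract x := cq_succ_eq x 0
  have hrel : cq y 2 = cq x 1 - 1 := by
    rw [hcy2, hcx1, hgy, sub_sub_cancel]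
    field_simp
  have this2 : Int.fract (cq y 2) = Int.fract (cq x 1) := by
    rw [hrel, show cq x 1 - 1 = cq x 1 + ((-1 : ℤ) : ℝ) by push_cast; ring,
      Int.fract_add_intCast]
  show 1 / Int.fract (cq y 2) = 1 / Int.fract (cq x 1)
  rw [this2]

theorem pm_add_int_cfEquiv (x y : ℝ) (hx : Irrational x) (hy : Irrational y)
    (ε : ℤ) (hε : ε = 1 ∨ ε = -1) (b : ℤ) (h : y = (ε : ℝ) * x + b) :
    CFEquiv x y := by
  rcases hε with rfl | rfl
  · refine ⟨1, 1, ?_⟩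
    have hfr : Int.fract y = Int.fract x := by
      rw [h]; push_cast; rw [one_mul, Int.fract_add_intCast]
    show 1 / Int.fract x = 1 / Int.fract y
    rw [hfr]
  · have h' : y = -x + b := by rw [h]; push_cast; ring
    have hfx : Irrational (Int.fract x) := by unfold Int.fract; exact hx.sub_intCast _
    have hne : Int.fract x ≠ 1/2 := by
      intro hc
      exact (hfx.ne_rat (1/2)) (by rw [hc]; norm_num)
    rcases lt_or_gt_of_ne hne with hlt | hgt
    · exact ⟨2, 3, (key x y hx b h' hlt).symm⟩
    · have hx' : x = -y + b := by rw [h']; ring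
      have hfy : Int.fract y < 1/2 := by
        have hfx0 : Int.fract x ≠ 0 := fun hc => hfx.ne_int 0 (by exact_mod_cast hc)
        rw [h', Int.fract_add_intCast, Int.fract_neg hfx0]
        linarith
      exact ⟨3, 2, key y x hy b hx' hfy⟩
end
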